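/- Let X and Y be finite-dimensional real inner product spaces (with the norms induced by their inner products), let F : X → Y be almost-linear with constant δ > 0, and let N be the envelope norm on Y × X generated by F. Then for every n ≥ 3 and all z₁,…,z_n ∈ Y × X: (2^{−n} Σ_{ε∈{−1,1}ⁿ} N(Σⱼ εⱼzⱼ)²)^{1/2} ≤ 2(1+√2)·log₂ n · (Σⱼ N(zⱼ)²)^{1/2}. -/

import Mathlib

open Finset

/-- `F` is almost-linear with constant `δ`. -/
def AlmostLinear {X Y : Type*} [NormedAddCommGroup X] [NormedSpace ℝ X]
    [NormedAddCommGroup Y] [NormedSpace ℝ Y] (F : X → Y) (δ : ℝ) : Prop :=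
  (∀ (c : ℝ) (x : X), F (c • x) = c • F x) ∧
  ∀ (m : ℕ) (x : Fin m → X) (l : Fin m → ℝ),
    ‖(∑ i, l i • F (x i)) - F (∑ i, l i • x i)‖ ≤ δ * ∑ i, |l i| * ‖x i‖

/-- The quasi-norm on `Y × X` associated to `F`. -/
noncomputable def quasiNormF {X Y : Type*} [NormedAddCommGroup X] [NormedAddCommGroup Y]
    (F : X → Y) (δ : ℝ) (z : Y × X) : ℝ :=
  ‖z.1 - F z.2‖ / δ + ‖z.2‖

/-- The envelope norm generated by a (quasi-)norm-like function `q`. -/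
noncomputable def envNorm {Z : Type*} [AddCommGroup Z] (q : Z → ℝ) (z : Z) : ℝ :=
  sInf { s : ℝ | ∃ (n : ℕ) (w : Fin n → Z), z = ∑ j, w j ∧ s = ∑ j, q (w j) }

/-- `Z` (with norm-like function `nn`) satisfies the Rademacher type-2 inequality
for sequences of length `n` with constant `T`. -/
def RadType2With {Z : Type*} [AddCommGroup Z] (nn : Z → ℝ) (n : ℕ) (T : ℝ) : Prop :=
  ∀ z : Fin n → Z,
    Real.sqrt ((∑ ε : Fin n → Bool, nn (∑ j, if ε j then z j else -z j) ^ 2) / 2 ^ n) ≤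
      T * Real.sqrt (∑ j, nn (z j) ^ 2)

/-- Rademacher cotype-2 inequality with constant `C`. -/
def RadCotype2With {Z : Type*} [AddCommGroup Z] (nn : Z → ℝ) (n : ℕ) (C : ℝ) : Prop :=
  ∀ z : Fin n → Z,
    Real.sqrt (∑ j, nn (z j) ^ 2) ≤
      C * Real.sqrt ((∑ ε : Fin n → Bool, nn (∑ j, if ε j then z j else -z j) ^ 2) / 2 ^ n)



set_option linter.unusedSectionVars false
set_option maxHeartbeats 1000000

section Setup
variable {Z : Type*} [AddCommGroup Z] (q : Z → ℝ) (hq : ∀ z, 0 ≤ q z)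

def envSet (z : Z) : Set ℝ := { s : ℝ | ∃ (n : ℕ) (w : Fin n → Z), z = ∑ j, w j ∧ s = ∑ j, q (w j) }

lemma envSet_nonempty (z : Z) : (envSet q z).Nonempty :=
  ⟨q z, 1, fun _ => z, by simp, by simp⟩

include hq in
lemma envSet_bddBelow (z : Z) : BddBelow (envSet q z) := by
  refine ⟨0, fun s hs => ?_⟩
  obtain ⟨n, w, -, rfl⟩ := hs
  exact Finset.sum_nonneg fun j _ => hq _

lemma envNorm_eq (z : Z) : envNorm q z = sInf (envSet q z) := rfl

include hq in
lemma envNorm_le (z : Z) : envNorm q z ≤ q z :=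
  csInf_le (envSet_bddBelow q hq z) ⟨1, fun _ => z, by simp, by simp⟩

include hq in
lemma envNorm_nonneg (z : Z) : 0 ≤ envNorm q z :=
  le_csInf (envSet_nonempty q z) (fun s hs => by
    obtain ⟨n, w, -, rfl⟩ := hs; exact Finset.sum_nonneg fun j _ => hq _)

lemma envSet_add {z z' : Z} {s s' : ℝ} (hs : s ∈ envSet q z) (hs' : s' ∈ envSet q z') :
    s + s' ∈ envSet q (z + z') := by
  obtain ⟨n, w, rfl, rfl⟩ := hs
  obtain ⟨n', w', rfl, rfl⟩ := hs'
  refine ⟨n + n', Fin.append w w', ?_, ?_⟩ <;>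
  · rw [Fin.sum_univ_add]
    simp [Fin.append_left, Fin.append_right]

include hq in
lemma envNorm_add (z z' : Z) : envNorm q (z + z') ≤ envNorm q z + envNorm q z' := by
  have key : ∀ s' ∈ envSet q z', envNorm q (z + z') - s' ≤ envNorm q z := by
    intro s' hs'
    refine le_csInf (envSet_nonempty q z) (fun s hs => ?_)
    have := csInf_le (envSet_bddBelow q hq (z + z')) (envSet_add q hs hs')
    rw [envNorm_eq]; linarith
  have : envNorm q (z + z') - envNorm q z ≤ envNorm q z' := by
    refine le_csInf (envSet_nonempty q z') (fun s' hs' => ?_)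
    linarith [key s' hs']
  linarith

include hq in
lemma envNorm_lb (z : Z) (c : ℝ) (h : ∀ s ∈ envSet q z, c ≤ s) : c ≤ envNorm q z :=
  le_csInf (envSet_nonempty q z) h

end Setup



def sg (b : Bool) : ℝ := if b then 1 else -1

lemma sg_mul (a b : Bool) : sg (a == b) = sg a * sg b := by cases a <;> cases b <;> simp [sg]

lemma abs_sg (b : Bool) : |sg b| = 1 := by cases b <;> simp [sg]

lemma ite_eq_sg {Z : Type*} [AddCommGroup Z] [Module ℝ Z] (b : Bool) (z : Z) :
    (if b then z else -z) = sg b • z := by cases b <;> simp [sg]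

section Cube
variable {H : Type*} [NormedAddCommGroup H] [InnerProductSpace ℝ H]

lemma cube_eq : ∀ (n : ℕ) (A : H) (w : Fin n → H),
    ∑ ε : Fin n → Bool, ‖A + ∑ i, sg (ε i) • w i‖ ^ 2
      = 2 ^ n * (‖A‖ ^ 2 + ∑ i, ‖w i‖ ^ 2) := by
  intro n
  induction n with
  | zero =>
    intro A w
    simp
  | succ n ih =>
    intro A w
    set e := Fin.consEquiv (fun _ : Fin (n+1) => Bool) with he
    rw [← (e.sum_comp (fun ε => ‖A + ∑ i, sg (ε i) • w i‖ ^ 2)), Fintype.sum_prod_type]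
    have : ∀ (b : Bool) (ε : Fin n → Bool),
        (A + ∑ i, sg (e (b, ε) i) • w i)
          = (A + sg b • w 0) + ∑ i, sg (ε i) • w i.succ := by
      intro b ε
      rw [Fin.sum_univ_succ]
      simp [he, Fin.consEquiv, add_assoc]
    simp only [this]
    rw [Fintype.sum_bool]
    rw [ih (A + sg true • w 0) (fun i => w i.succ), ih (A + sg false • w 0) (fun i => w i.succ)]
    have par : ‖A + sg true • w 0‖ ^ 2 + ‖A + sg false • w 0‖ ^ 2
        = 2 * (‖A‖ ^ 2 + ‖w 0‖ ^ 2) := by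
      have h1 := norm_add_sq_real A (w 0)
      have h2 := norm_sub_sq_real A (w 0)
      have e1 : A + sg true • w 0 = A + w 0 := by simp [sg]
      have e2 : A + sg false • w 0 = A - w 0 := by simp [sg, sub_eq_add_neg]
      rw [e1, e2]; linarith
    rw [Fin.sum_univ_succ (f := fun i => ‖w i‖ ^ 2), pow_succ]
    linear_combination (2:ℝ) ^ n * par

end Cube

section Cube2
variable {H : Type*} [NormedAddCommGroup H] [InnerProductSpace ℝ H]

lemma cube_eq' (ι : Type*) [Fintype ι] [DecidableEq ι] (A : H) (w : ι → H) :
    ∑ ε : ι → Bool, ‖A + ∑ i, sg (ε i) • w i‖ ^ 2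
      = 2 ^ (Fintype.card ι) * (‖A‖ ^ 2 + ∑ i, ‖w i‖ ^ 2) := by
  set m := Fintype.card ι
  obtain ⟨e⟩ : Nonempty (ι ≃ Fin m) := ⟨Fintype.equivFin ι⟩
  have cube := cube_eq m A (fun i => w (e.symm i))
  rw [← ((Equiv.arrowCongr e (Equiv.refl Bool)).sum_comp
    (fun ε : Fin m → Bool => ‖A + ∑ i, sg (ε i) • w (e.symm i)‖ ^ 2))] at cube
  rw [← (e.symm.sum_comp (fun i => ‖w i‖ ^ 2))]
  rw [← cube]
  apply Finset.sum_congr rfl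
  intro ε _
  rw [← (e.symm.sum_comp (fun i => sg (ε i) • w i))]
  congr 2

/-- Minkowski-type combination in ℓ² over a finite index type. -/
lemma l2tri {ι : Type*} [Fintype ι] (u v w : ι → ℝ) (a b : ℝ)
    (hu : ∀ i, 0 ≤ u i) (hv : ∀ i, 0 ≤ v i) (hw : ∀ i, 0 ≤ w i)
    (h : ∀ i, u i ≤ v i + w i) (ha : 0 ≤ a) (hb : 0 ≤ b)
    (hva : ∑ i, v i ^ 2 ≤ a ^ 2) (hwb : ∑ i, w i ^ 2 ≤ b ^ 2) :
    ∑ i, u i ^ 2 ≤ (a + b) ^ 2 := by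
  have h1 : ∑ i, u i ^ 2 ≤ ∑ i, (v i + w i) ^ 2 := by
    apply Finset.sum_le_sum
    intro i _
    exact pow_le_pow_left₀ (hu i) (h i) 2
  have hcs : (∑ i, v i * w i) ^ 2 ≤ (∑ i, v i ^ 2) * (∑ i, w i ^ 2) :=
    Finset.sum_mul_sq_le_sq_mul_sq Finset.univ v w
  have hvw : ∑ i, v i * w i ≤ a * b := by
    have h0 : (0:ℝ) ≤ ∑ i, v i * w i :=
      Finset.sum_nonneg fun i _ => mul_nonneg (hv i) (hw i)
    have hab : (∑ i, v i * w i)^2 ≤ (a*b)^2 := by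
      calc (∑ i, v i * w i) ^ 2 ≤ (∑ i, v i ^ 2) * (∑ i, w i ^ 2) := hcs
        _ ≤ a^2 * b^2 :=
            mul_le_mul hva hwb (Finset.sum_nonneg fun i _ => sq_nonneg _) (sq_nonneg a)
        _ = (a*b)^2 := by ring
    nlinarith [mul_nonneg ha hb]
  have hexp : ∑ i, (v i + w i) ^ 2 = ∑ i, v i ^ 2 + 2 * ∑ i, v i * w i + ∑ i, w i ^ 2 := by
    rw [Finset.mul_sum, ← Finset.sum_add_distrib, ← Finset.sum_add_distrib]
    apply Finset.sum_congr rfl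
    intro i _; ring
  calc ∑ i, u i ^ 2 ≤ ∑ i, (v i + w i) ^ 2 := h1
    _ = ∑ i, v i ^ 2 + 2 * ∑ i, v i * w i + ∑ i, w i ^ 2 := hexp
    _ ≤ a^2 + 2*(a*b) + b^2 := by linarith
    _ = (a+b)^2 := by ring


lemma cube_eq0 (n : ℕ) (w : Fin n → H) :
    ∑ ε : Fin n → Bool, ‖∑ i, sg (ε i) • w i‖ ^ 2 = 2 ^ n * ∑ i, ‖w i‖ ^ 2 := by
  have h := cube_eq n (0 : H) w
  simpa using h

lemma cube_pair_eq : ∀ (m : ℕ) (a b : Fin m → H),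
    ∑ τ : Fin m → Bool, ∑ i, ‖a i + sg (τ i) • b i‖ ^ 2
      = 2 ^ m * ∑ i, (‖a i‖ ^ 2 + ‖b i‖ ^ 2) := by
  intro m
  induction m with
  | zero => intro a b; simp
  | succ m ih =>
    intro a b
    set e := Fin.consEquiv (fun _ : Fin (m+1) => Bool) with he
    rw [← (e.sum_comp (fun τ => ∑ i, ‖a i + sg (τ i) • b i‖ ^ 2)), Fintype.sum_prod_type]
    have hsp : ∀ (t : Bool) (τ : Fin m → Bool),
        ∑ i : Fin (m+1), ‖a i + sg (e (t, τ) i) • b i‖ ^ 2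
          = ‖a 0 + sg t • b 0‖ ^ 2 + ∑ i : Fin m, ‖a i.succ + sg (τ i) • b i.succ‖ ^ 2 := by
      intro t τ
      rw [Fin.sum_univ_succ]
      simp [he, Fin.consEquiv]
    simp only [hsp]
    rw [Fintype.sum_bool]
    simp only [Finset.sum_add_distrib, Finset.sum_const, Finset.card_univ, Fintype.card_fun,
      Fintype.card_bool, Fintype.card_fin, nsmul_eq_mul]
    rw [ih (fun i => a i.succ) (fun i => b i.succ), Finset.sum_add_distrib]
    have par : ‖a 0 + sg true • b 0‖ ^ 2 + ‖a 0 + sg false • b 0‖ ^ 2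
        = 2 * (‖a 0‖ ^ 2 + ‖b 0‖ ^ 2) := by
      have h1 := norm_add_sq_real (a 0) (b 0)
      have h2 := norm_sub_sq_real (a 0) (b 0)
      have e1 : a 0 + sg true • b 0 = a 0 + b 0 := by simp [sg]
      have e2 : a 0 + sg false • b 0 = a 0 - b 0 := by simp [sg, sub_eq_add_neg]
      rw [e1, e2]; linarith
    rw [Fin.sum_univ_succ (f := fun i => ‖a i‖ ^ 2), Fin.sum_univ_succ (f := fun i => ‖b i‖ ^ 2),
      pow_succ]
    push_cast
    linear_combination (2:ℝ) ^ m * par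

end Cube2


section MainDev

variable {X Y : Type*} [NormedAddCommGroup X] [InnerProductSpace ℝ X]
  [NormedAddCommGroup Y] [InnerProductSpace ℝ Y]
  (F : X → Y) (δ : ℝ)

lemma al_zero (hF : AlmostLinear F δ) : F 0 = 0 := by
  simpa using hF.1 0 0

lemma qF_nonneg (hδ : 0 < δ) : ∀ z : Y × X, 0 ≤ quasiNormF F δ z := fun _ =>
  add_nonneg (div_nonneg (norm_nonneg _) hδ.le) (norm_nonneg _)

lemma al_two (hδ : 0 < δ) (hF : AlmostLinear F δ) (x₁ x₂ : X) (c : ℝ) (hc : |c| ≤ 1) :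
    ‖F x₁ + c • F x₂ - F (x₁ + c • x₂)‖ ≤ δ * (‖x₁‖ + ‖x₂‖) := by
  have h := hF.2 2 ![x₁, x₂] ![1, c]
  simp [Fin.sum_univ_two] at h
  have h1 : |c| * ‖x₂‖ ≤ ‖x₂‖ := by
    nlinarith [norm_nonneg x₂, abs_nonneg c]
  have h2 : δ * (‖x₁‖ + |c| * ‖x₂‖) ≤ δ * (‖x₁‖ + ‖x₂‖) :=
    mul_le_mul_of_nonneg_left (by linarith) hδ.le
  linarith

lemma NN_le_q (hδ : 0 < δ) (z : Y × X) : envNorm (quasiNormF F δ) z ≤ quasiNormF F δ z :=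
  envNorm_le _ (qF_nonneg F δ hδ) z

lemma NN_nonneg (hδ : 0 < δ) (z : Y × X) : 0 ≤ envNorm (quasiNormF F δ) z :=
  envNorm_nonneg _ (qF_nonneg F δ hδ) z

lemma NN_add (hδ : 0 < δ) (z z' : Y × X) :
    envNorm (quasiNormF F δ) (z + z') ≤ envNorm (quasiNormF F δ) z + envNorm (quasiNormF F δ) z' :=
  envNorm_add _ (qF_nonneg F δ hδ) z z'

lemma NN_zero (hδ : 0 < δ) (hF : AlmostLinear F δ) : envNorm (quasiNormF F δ) (0 : Y × X) = 0 := by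
  refine le_antisymm ?_ (NN_nonneg F δ hδ 0)
  have h := NN_le_q F δ hδ (0 : Y × X)
  have hq : quasiNormF F δ (0 : Y × X) = 0 := by
    simp [quasiNormF, al_zero F δ hF]
  linarith

lemma NN_snd_le (hδ : 0 < δ) (z : Y × X) : ‖z.2‖ ≤ envNorm (quasiNormF F δ) z := by
  apply envNorm_lb _ (qF_nonneg F δ hδ)
  rintro s ⟨n, w, rfl, rfl⟩
  calc ‖(∑ j, w j).2‖ = ‖∑ j, (w j).2‖ := by rw [Prod.snd_sum]
    _ ≤ ∑ j, ‖(w j).2‖ := norm_sum_le _ _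
    _ ≤ ∑ j, quasiNormF F δ (w j) := Finset.sum_le_sum fun j _ =>
        le_add_of_nonneg_left (div_nonneg (norm_nonneg _) hδ.le)

lemma NN_defect_le (hδ : 0 < δ) (hF : AlmostLinear F δ) (z : Y × X) : ‖z.1 - F z.2‖ / δ ≤ envNorm (quasiNormF F δ) z := by
  apply envNorm_lb _ (qF_nonneg F δ hδ)
  rintro s ⟨n, w, rfl, rfl⟩
  have h1 : (∑ j, w j).1 = ∑ j, (w j).1 := Prod.fst_sum
  have h2 : (∑ j, w j).2 = ∑ j, (w j).2 := Prod.snd_sum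
  have hal := hF.2 n (fun j => (w j).2) (fun _ => 1)
  simp only [one_smul, abs_one, one_mul] at hal
  have key : ‖(∑ j, w j).1 - F ((∑ j, w j).2)‖
      ≤ (∑ j, ‖(w j).1 - F ((w j).2)‖) + δ * ∑ j, ‖(w j).2‖ := by
    rw [h1, h2]
    calc ‖(∑ j, (w j).1) - F (∑ j, (w j).2)‖
        = ‖(∑ j, ((w j).1 - F ((w j).2))) + ((∑ j, F ((w j).2)) - F (∑ j, (w j).2))‖ := by
          rw [Finset.sum_sub_distrib]; congr 1; abel
      _ ≤ ‖∑ j, ((w j).1 - F ((w j).2))‖ + ‖(∑ j, F ((w j).2)) - F (∑ j, (w j).2)‖ :=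
          norm_add_le _ _
      _ ≤ (∑ j, ‖(w j).1 - F ((w j).2)‖) + δ * ∑ j, ‖(w j).2‖ :=
          add_le_add (norm_sum_le _ _) hal
  have hq : ∑ j, quasiNormF F δ (w j)
      = (∑ j, ‖(w j).1 - F ((w j).2)‖) / δ + ∑ j, ‖(w j).2‖ := by
    simp only [quasiNormF]
    rw [Finset.sum_add_distrib, Finset.sum_div]
  rw [hq]
  calc ‖(∑ j, w j).1 - F ((∑ j, w j).2)‖ / δ
      ≤ ((∑ j, ‖(w j).1 - F ((w j).2)‖) + δ * ∑ j, ‖(w j).2‖) / δ :=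
        (div_le_div_iff_of_pos_right hδ).mpr key
    _ = (∑ j, ‖(w j).1 - F ((w j).2)‖) / δ + ∑ j, ‖(w j).2‖ := by
        rw [add_div, mul_div_cancel_left₀ _ hδ.ne']

/-- Reindex the cube sum along an equivalence of index types. -/
lemma cube_sum_reindex {ι ι' : Type*} [Fintype ι] [DecidableEq ι] [Fintype ι'] [DecidableEq ι'] (e : ι ≃ ι')
    {M : Type*} [AddCommMonoid M] [Module ℝ M] (φ : M → ℝ) (P : ι → M) :
    ∑ ε : ι → Bool, φ (∑ i, sg (ε i) • P i)
      = ∑ ε' : ι' → Bool, φ (∑ i', sg (ε' i') • P (e.symm i')) := by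
  rw [← ((Equiv.arrowCongr e (Equiv.refl Bool)).sum_comp
    (fun ε' : ι' → Bool => φ (∑ i', sg (ε' i') • P (e.symm i'))))]
  apply Finset.sum_congr rfl
  intro ε _
  rw [← (e.symm.sum_comp (fun i => sg (ε i) • P i))]
  congr 1

/-- The essential type-2 bound predicate for vectors of the form `(F x, x)`. -/
def EssBound (ι : Type*) [Fintype ι] [DecidableEq ι] (c : ℝ) : Prop :=
  ∀ x : ι → X, ∑ ε : ι → Bool,
      envNorm (quasiNormF F δ) (∑ i, sg (ε i) • ((F (x i), x i) : Y × X)) ^ 2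
    ≤ c ^ 2 * 2 ^ (Fintype.card ι) * ∑ i, ‖x i‖ ^ 2

lemma essBound_equiv {ι ι' : Type*} [Fintype ι] [DecidableEq ι] [Fintype ι'] [DecidableEq ι'] (e : ι ≃ ι') {c : ℝ}
    (h : EssBound F δ ι' c) : EssBound F δ ι c := by
  intro x
  rw [cube_sum_reindex e (fun z : Y × X => envNorm (quasiNormF F δ) z ^ 2)
    (fun i => ((F (x i), x i) : Y × X))]
  have hx : ∑ i, ‖x i‖ ^ 2 = ∑ i', ‖x (e.symm i')‖ ^ 2 :=
    (e.symm.sum_comp (fun i => ‖x i‖ ^ 2)).symm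
  rw [hx, Fintype.card_congr e]
  exact h (fun i' => x (e.symm i'))

lemma essBound_pad {ι κ : Type*} [Fintype ι] [DecidableEq ι] [Fintype κ] [DecidableEq κ] {c : ℝ}
    (hδ : 0 < δ) (hF : AlmostLinear F δ)
    (h : EssBound F δ (ι ⊕ κ) c) : EssBound F δ ι c := by
  classical
  intro x
  have hx := h (Sum.elim x 0)
  have hinner : ∀ ε' : ι ⊕ κ → Bool,
      (∑ p, sg (ε' p) • ((F (Sum.elim x 0 p), Sum.elim x 0 p) : Y × X))
        = ∑ i, sg (ε' (Sum.inl i)) • ((F (x i), x i) : Y × X) := by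
    intro ε'
    rw [Fintype.sum_sum_type]
    have h0 : ∑ j : κ, sg (ε' (Sum.inr j)) •
        ((F (Sum.elim x 0 (Sum.inr j)), Sum.elim x 0 (Sum.inr j)) : Y × X) = 0 := by
      apply Finset.sum_eq_zero
      intro j _
      have hz : ((F (Sum.elim x 0 (Sum.inr j)), Sum.elim x 0 (Sum.inr j)) : Y × X) = 0 := by
        simp [al_zero F δ hF, Prod.ext_iff]
      rw [hz, smul_zero]
    rw [h0, add_zero]
    rfl
  simp only [hinner] at hx
  rw [← ((Equiv.sumArrowEquivProdArrow ι κ Bool).symm.sum_comp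
    (fun ε' : ι ⊕ κ → Bool =>
      envNorm (quasiNormF F δ) (∑ i, sg (ε' (Sum.inl i)) • ((F (x i), x i) : Y × X)) ^ 2)),
    Fintype.sum_prod_type] at hx
  have hsimp : ∀ (ε : ι → Bool) (η : κ → Bool) (i : ι),
      (Equiv.sumArrowEquivProdArrow ι κ Bool).symm (ε, η) (Sum.inl i) = ε i := fun _ _ _ => rfl
  simp only [hsimp] at hx
  have hconst : ∀ ε : ι → Bool,
      ∑ _η : κ → Bool,
        envNorm (quasiNormF F δ) (∑ i, sg (ε i) • ((F (x i), x i) : Y × X)) ^ 2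
      = (2 : ℝ) ^ (Fintype.card κ) *
        envNorm (quasiNormF F δ) (∑ i, sg (ε i) • ((F (x i), x i) : Y × X)) ^ 2 := by
    intro ε
    rw [Finset.sum_const, Finset.card_univ, Fintype.card_fun, Fintype.card_bool, nsmul_eq_mul]
    push_cast
    ring
  simp only [hconst] at hx
  rw [← Finset.mul_sum] at hx
  have hxsum : ∑ p : ι ⊕ κ, ‖Sum.elim x 0 p‖ ^ 2 = ∑ i, ‖x i‖ ^ 2 := by
    rw [Fintype.sum_sum_type]
    simp
  rw [hxsum, Fintype.card_sum, pow_add] at hx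
  have h2pos : (0:ℝ) < 2 ^ (Fintype.card κ) := by positivity
  calc ∑ ε : ι → Bool,
      envNorm (quasiNormF F δ) (∑ i, sg (ε i) • ((F (x i), x i) : Y × X)) ^ 2
      ≤ c ^ 2 * 2 ^ (Fintype.card ι) * ∑ i, ‖x i‖ ^ 2 := by
        rw [← mul_le_mul_iff_right₀ h2pos]
        calc (2:ℝ) ^ (Fintype.card κ) * ∑ ε : ι → Bool,
            envNorm (quasiNormF F δ) (∑ i, sg (ε i) • ((F (x i), x i) : Y × X)) ^ 2
            ≤ c ^ 2 * (2 ^ Fintype.card ι * 2 ^ Fintype.card κ) * ∑ i, ‖x i‖ ^ 2 := hx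
          _ = 2 ^ (Fintype.card κ) * (c ^ 2 * 2 ^ (Fintype.card ι) * ∑ i, ‖x i‖ ^ 2) := by ring

/-- The sign-pair reindexing equivalence for the doubling step. -/
def cubePairEquiv (m : ℕ) : ((Fin m → Bool) × (Fin m → Bool)) ≃ (Fin m × Bool → Bool) where
  toFun p := fun q => match q with
    | (i, false) => p.2 i
    | (i, true) => p.2 i == p.1 i
  invFun ε := (fun i => ε (i, false) == ε (i, true), fun i => ε (i, false))
  left_inv p := by
    obtain ⟨τ, σ⟩ := p
    simp only [Prod.mk.injEq]
    constructor
    · funext i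
      show (σ i == (σ i == τ i)) = τ i
      cases σ i <;> cases τ i <;> rfl
    · trivial
  right_inv ε := by
    funext q
    obtain ⟨i, b⟩ := q
    cases b
    · rfl
    · show (ε (i, false) == (ε (i, false) == ε (i, true))) = ε (i, true)
      cases h1 : ε (i, false) <;> cases h2 : ε (i, true) <;> simp

lemma essBound_pair (hδ : 0 < δ) (hF : AlmostLinear F δ) {m : ℕ} {c : ℝ} (hc : 0 ≤ c)
    (h : EssBound F δ (Fin m) c) : EssBound F δ (Fin m × Bool) (c + Real.sqrt 2) := by
  classical
  intro x
  set a : Fin m → X := fun i => x (i, false) with ha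
  set b : Fin m → X := fun i => x (i, true) with hb
  set v : (Fin m → Bool) → Fin m → X := fun τ i => a i + sg (τ i) • b i with hv
  set g : (Fin m → Bool) → Fin m → Y := fun τ i => F (a i) + sg (τ i) • F (b i) - F (v τ i)
    with hg
  set S : ℝ := ∑ i, (‖a i‖ ^ 2 + ‖b i‖ ^ 2) with hS
  have hSnn : 0 ≤ S := Finset.sum_nonneg fun i _ => by positivity
  have hpS : ∑ p : Fin m × Bool, ‖x p‖ ^ 2 = S := by
    rw [Fintype.sum_prod_type]
    rw [hS]
    apply Finset.sum_congr rfl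
    intro i _
    rw [Fintype.sum_bool]
    rw [add_comm]
  -- reindex the cube by the pair equivalence
  rw [← ((cubePairEquiv m).sum_comp
    (fun ε : Fin m × Bool → Bool =>
      envNorm (quasiNormF F δ) (∑ p, sg (ε p) • ((F (x p), x p) : Y × X)) ^ 2)),
    Fintype.sum_prod_type]
  -- split the inner sum
  have hsplit : ∀ τ σ : Fin m → Bool,
      (∑ p : Fin m × Bool, sg (cubePairEquiv m (τ, σ) p) • ((F (x p), x p) : Y × X))
        = (∑ i, sg (σ i) • ((F (v τ i), v τ i) : Y × X))
          + ∑ i, sg (σ i) • ((g τ i, 0) : Y × X) := by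
    intro τ σ
    rw [Fintype.sum_prod_type, ← Finset.sum_add_distrib]
    apply Finset.sum_congr rfl
    intro i _
    rw [Fintype.sum_bool]
    have e1 : cubePairEquiv m (τ, σ) (i, true) = (σ i == τ i) := rfl
    have e2 : cubePairEquiv m (τ, σ) (i, false) = σ i := rfl
    have hx1 : x (i, true) = b i := rfl
    have hx2 : x (i, false) = a i := rfl
    rw [e1, e2, sg_mul, mul_smul, hx1, hx2, ← smul_add, ← smul_add]
    congr 1
    have h1 : sg (τ i) • F (b i) + F (a i) = F (v τ i) + g τ i := by
      simp only [hg]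
      abel
    have h2 : sg (τ i) • b i + a i = v τ i + 0 := by
      simp only [hv]
      abel
    calc sg (τ i) • ((F (b i), b i) : Y × X) + ((F (a i), a i) : Y × X)
        = (sg (τ i) • F (b i) + F (a i), sg (τ i) • b i + a i) := rfl
      _ = (F (v τ i) + g τ i, v τ i + 0) := by rw [h1, h2]
      _ = ((F (v τ i), v τ i) : Y × X) + ((g τ i, 0) : Y × X) := rfl
  -- bound on the error vectors
  have hgb : ∀ (τ : Fin m → Bool) (i : Fin m), ‖g τ i‖ ≤ δ * (‖a i‖ + ‖b i‖) := by
    intro τ i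
    simp only [hg, hv]
    exact al_two F δ hδ hF (a i) (b i) (sg (τ i)) (le_of_eq (abs_sg _))
  -- the `g`-part of the envelope norm
  have hgpart : ∀ τ σ : Fin m → Bool,
      envNorm (quasiNormF F δ) (∑ i, sg (σ i) • ((g τ i, 0) : Y × X))
        ≤ ‖∑ i, sg (σ i) • g τ i‖ / δ := by
    intro τ σ
    have hzero : (∑ i, sg (σ i) • ((g τ i, 0) : Y × X))
        = ((∑ i, sg (σ i) • g τ i, 0) : Y × X) := by
      rw [Prod.ext_iff]
      constructor
      · rw [Prod.fst_sum]
        apply Finset.sum_congr rfl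
        intro i _
        rfl
      · rw [Prod.snd_sum]
        simp
    rw [hzero]
    refine (NN_le_q F δ hδ _).trans ?_
    simp [quasiNormF, al_zero F δ hF]
  -- pointwise triangle bound
  have hpt : ∀ τ σ : Fin m → Bool,
      envNorm (quasiNormF F δ)
          (∑ p, sg (cubePairEquiv m (τ, σ) p) • ((F (x p), x p) : Y × X))
        ≤ envNorm (quasiNormF F δ) (∑ i, sg (σ i) • ((F (v τ i), v τ i) : Y × X))
          + ‖∑ i, sg (σ i) • g τ i‖ / δ := by
    intro τ σ
    rw [hsplit τ σ]
    exact le_trans (NN_add F δ hδ _ _) (add_le_add le_rfl (hgpart τ σ))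
  -- inner (σ) estimate for fixed τ
  have hτb : ∀ τ : Fin m → Bool,
      ∑ σ : Fin m → Bool,
        envNorm (quasiNormF F δ)
          (∑ p, sg (cubePairEquiv m (τ, σ) p) • ((F (x p), x p) : Y × X)) ^ 2
        ≤ (c * Real.sqrt ((2:ℝ) ^ m * ∑ i, ‖v τ i‖ ^ 2)
            + Real.sqrt 2 * Real.sqrt ((2:ℝ) ^ m * S)) ^ 2 := by
    intro τ
    refine l2tri
      (fun σ => envNorm (quasiNormF F δ)
        (∑ p, sg (cubePairEquiv m (τ, σ) p) • ((F (x p), x p) : Y × X)))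
      (fun σ => envNorm (quasiNormF F δ) (∑ i, sg (σ i) • ((F (v τ i), v τ i) : Y × X)))
      (fun σ => ‖∑ i, sg (σ i) • g τ i‖ / δ)
      (c * Real.sqrt ((2:ℝ) ^ m * ∑ i, ‖v τ i‖ ^ 2))
      (Real.sqrt 2 * Real.sqrt ((2:ℝ) ^ m * S))
      (fun σ => NN_nonneg F δ hδ _) (fun σ => NN_nonneg F δ hδ _)
      (fun σ => div_nonneg (norm_nonneg _) hδ.le) (hpt τ)
      (by positivity) (by positivity) ?_ ?_
    · have hh := h (v τ)
      rw [mul_pow, Real.sq_sqrt (by positivity)]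
      simpa [Fintype.card_fin, mul_assoc] using hh
    · have hcube := cube_eq0 m (g τ)
      have hsum : ∑ σ : Fin m → Bool, (‖∑ i, sg (σ i) • g τ i‖ / δ) ^ 2
          = (∑ σ : Fin m → Bool, ‖∑ i, sg (σ i) • g τ i‖ ^ 2) / δ ^ 2 := by
        rw [Finset.sum_div]
        apply Finset.sum_congr rfl
        intro σ _
        rw [div_pow]
      have hgs : ∑ i, ‖g τ i‖ ^ 2 ≤ δ ^ 2 * (2 * S) := by
        have hone : ∀ i, ‖g τ i‖ ^ 2 ≤ δ ^ 2 * (2 * (‖a i‖ ^ 2 + ‖b i‖ ^ 2)) := by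
          intro i
          have hsq := pow_le_pow_left₀ (norm_nonneg (g τ i)) (hgb τ i) 2
          have hpar : (δ * (‖a i‖ + ‖b i‖)) ^ 2 ≤ δ ^ 2 * (2 * (‖a i‖ ^ 2 + ‖b i‖ ^ 2)) := by
            nlinarith [mul_nonneg (sq_nonneg δ) (sq_nonneg (‖a i‖ - ‖b i‖))]
          linarith
        calc ∑ i, ‖g τ i‖ ^ 2 ≤ ∑ i, δ ^ 2 * (2 * (‖a i‖ ^ 2 + ‖b i‖ ^ 2)) :=
              Finset.sum_le_sum fun i _ => hone i
          _ = δ ^ 2 * (2 * S) := by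
              rw [hS, ← Finset.mul_sum, ← Finset.mul_sum]
      rw [hsum, hcube, mul_pow, Real.sq_sqrt (by norm_num : (0:ℝ) ≤ 2),
        Real.sq_sqrt (by positivity : (0:ℝ) ≤ (2:ℝ) ^ m * S)]
      rw [div_le_iff₀ (by positivity : (0:ℝ) < δ ^ 2)]
      calc (2:ℝ) ^ m * ∑ i, ‖g τ i‖ ^ 2 ≤ (2:ℝ) ^ m * (δ ^ 2 * (2 * S)) := by
            exact mul_le_mul_of_nonneg_left hgs (by positivity)
        _ = 2 * ((2:ℝ) ^ m * S) * δ ^ 2 := by ring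
  -- outer (τ) estimate
  have hconv : ∀ τ : Fin m → Bool,
      (Real.sqrt (∑ σ : Fin m → Bool,
        envNorm (quasiNormF F δ)
          (∑ p, sg (cubePairEquiv m (τ, σ) p) • ((F (x p), x p) : Y × X)) ^ 2)) ^ 2
      = ∑ σ : Fin m → Bool,
        envNorm (quasiNormF F δ)
          (∑ p, sg (cubePairEquiv m (τ, σ) p) • ((F (x p), x p) : Y × X)) ^ 2 :=
    fun τ => Real.sq_sqrt (Finset.sum_nonneg fun σ _ => sq_nonneg _)
  have houter : ∑ τ : Fin m → Bool, ∑ σ : Fin m → Bool,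
      envNorm (quasiNormF F δ)
        (∑ p, sg (cubePairEquiv m (τ, σ) p) • ((F (x p), x p) : Y × X)) ^ 2
      ≤ ((c + Real.sqrt 2) * Real.sqrt ((2:ℝ) ^ (2 * m) * S)) ^ 2 := by
    have hmain := l2tri
      (fun τ : Fin m → Bool => Real.sqrt (∑ σ : Fin m → Bool,
        envNorm (quasiNormF F δ)
          (∑ p, sg (cubePairEquiv m (τ, σ) p) • ((F (x p), x p) : Y × X)) ^ 2))
      (fun τ : Fin m → Bool => c * Real.sqrt ((2:ℝ) ^ m * ∑ i, ‖v τ i‖ ^ 2))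
      (fun _ : Fin m → Bool => Real.sqrt 2 * Real.sqrt ((2:ℝ) ^ m * S))
      (c * Real.sqrt ((2:ℝ) ^ (2 * m) * S))
      (Real.sqrt 2 * Real.sqrt ((2:ℝ) ^ (2 * m) * S))
      (fun τ => Real.sqrt_nonneg _)
      (fun τ => by positivity)
      (fun τ => by positivity)
      (fun τ => by
        rw [← Real.sqrt_sq (by positivity : (0:ℝ) ≤ c * Real.sqrt ((2:ℝ) ^ m * ∑ i, ‖v τ i‖ ^ 2)
          + Real.sqrt 2 * Real.sqrt ((2:ℝ) ^ m * S))]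
        exact Real.sqrt_le_sqrt (hτb τ))
      (by positivity) (by positivity)
      ?_ ?_
    · calc ∑ τ : Fin m → Bool, ∑ σ : Fin m → Bool,
          envNorm (quasiNormF F δ)
            (∑ p, sg (cubePairEquiv m (τ, σ) p) • ((F (x p), x p) : Y × X)) ^ 2
          = ∑ τ : Fin m → Bool, (Real.sqrt (∑ σ : Fin m → Bool,
            envNorm (quasiNormF F δ)
              (∑ p, sg (cubePairEquiv m (τ, σ) p) • ((F (x p), x p) : Y × X)) ^ 2)) ^ 2 := by
            apply Finset.sum_congr rfl
            intro τ _
            rw [hconv τ]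
        _ ≤ (c * Real.sqrt ((2:ℝ) ^ (2 * m) * S)
              + Real.sqrt 2 * Real.sqrt ((2:ℝ) ^ (2 * m) * S)) ^ 2 := hmain
        _ = ((c + Real.sqrt 2) * Real.sqrt ((2:ℝ) ^ (2 * m) * S)) ^ 2 := by ring
    · -- ∑ τ, (c √(2^m Σ‖v τ‖²))² ≤ (c √(2^(2m) S))²
      have hpar := cube_pair_eq m a b
      refine le_of_eq ?_
      calc ∑ τ : Fin m → Bool, (c * Real.sqrt ((2:ℝ) ^ m * ∑ i, ‖v τ i‖ ^ 2)) ^ 2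
          = ∑ τ : Fin m → Bool, c ^ 2 * ((2:ℝ) ^ m * ∑ i, ‖v τ i‖ ^ 2) := by
            apply Finset.sum_congr rfl
            intro τ _
            rw [mul_pow, Real.sq_sqrt (by positivity)]
        _ = c ^ 2 * ((2:ℝ) ^ m * ∑ τ : Fin m → Bool, ∑ i, ‖v τ i‖ ^ 2) := by
            rw [← Finset.mul_sum, ← Finset.mul_sum]
        _ = c ^ 2 * ((2:ℝ) ^ m * ((2:ℝ) ^ m * S)) := by rw [hpar]
        _ = (c * Real.sqrt ((2:ℝ) ^ (2 * m) * S)) ^ 2 := by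
            rw [mul_pow, Real.sq_sqrt (by positivity : (0:ℝ) ≤ (2:ℝ) ^ (2 * m) * S),
              show (2:ℝ) ^ (2 * m) = 2 ^ m * 2 ^ m by rw [two_mul, pow_add]]
            ring
    · refine le_of_eq ?_
      calc ∑ _τ : Fin m → Bool, (Real.sqrt 2 * Real.sqrt ((2:ℝ) ^ m * S)) ^ 2
          = (2:ℝ) ^ m * (Real.sqrt 2 * Real.sqrt ((2:ℝ) ^ m * S)) ^ 2 := by
            rw [Finset.sum_const, Finset.card_univ, Fintype.card_fun, Fintype.card_bool,
              Fintype.card_fin, nsmul_eq_mul]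
            push_cast
            ring
        _ = (Real.sqrt 2 * Real.sqrt ((2:ℝ) ^ (2 * m) * S)) ^ 2 := by
            rw [mul_pow, mul_pow, Real.sq_sqrt (by norm_num : (0:ℝ) ≤ 2),
              Real.sq_sqrt (by positivity : (0:ℝ) ≤ (2:ℝ) ^ m * S),
              Real.sq_sqrt (by positivity : (0:ℝ) ≤ (2:ℝ) ^ (2 * m) * S),
              show (2:ℝ) ^ (2 * m) = 2 ^ m * 2 ^ m by rw [two_mul, pow_add]]
            ring
  -- conclude
  calc ∑ τ : Fin m → Bool, ∑ σ : Fin m → Bool,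
      envNorm (quasiNormF F δ)
        (∑ p, sg (cubePairEquiv m (τ, σ) p) • ((F (x p), x p) : Y × X)) ^ 2
      ≤ ((c + Real.sqrt 2) * Real.sqrt ((2:ℝ) ^ (2 * m) * S)) ^ 2 := houter
    _ = (c + Real.sqrt 2) ^ 2 * 2 ^ (Fintype.card (Fin m × Bool)) * ∑ p, ‖x p‖ ^ 2 := by
        rw [mul_pow, Real.sq_sqrt (by positivity : (0:ℝ) ≤ (2:ℝ) ^ (2 * m) * S), hpS,
          Fintype.card_prod, Fintype.card_fin, Fintype.card_bool]
        rw [mul_comm m 2]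
        ring

lemma ess_base0 (hδ : 0 < δ) (hF : AlmostLinear F δ) :
    EssBound F δ (Fin 0) 1 := by
  intro x
  have h0 : envNorm (quasiNormF F δ) (0 : Y × X) = 0 := NN_zero F δ hδ hF
  simp [h0]

lemma ess_base1 (hδ : 0 < δ) (hF : AlmostLinear F δ) :
    EssBound F δ (Fin 1) 1 := by
  intro x
  have hbd : ∀ ε : Fin 1 → Bool,
      envNorm (quasiNormF F δ) (∑ i, sg (ε i) • ((F (x i), x i) : Y × X)) ≤ ‖x 0‖ := by
    intro ε
    rw [Fin.sum_univ_one]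
    refine (NN_le_q F δ hδ _).trans ?_
    have hFs : F (sg (ε 0) • x 0) = sg (ε 0) • F (x 0) := hF.1 _ _
    have hrw : sg (ε 0) • ((F (x 0), x 0) : Y × X) = (sg (ε 0) • F (x 0), sg (ε 0) • x 0) := rfl
    rw [hrw]
    have hneg : F (-x 0) = -F (x 0) := by
      have := hF.1 (-1) (x 0)
      simpa using this
    cases h0 : ε 0 <;>
      simp [quasiNormF, hFs, h0, sg, norm_neg, hneg]
  calc ∑ ε : Fin 1 → Bool,
      envNorm (quasiNormF F δ) (∑ i, sg (ε i) • ((F (x i), x i) : Y × X)) ^ 2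
      ≤ ∑ _ε : Fin 1 → Bool, ‖x 0‖ ^ 2 :=
        Finset.sum_le_sum fun ε _ => pow_le_pow_left₀ (NN_nonneg F δ hδ _) (hbd ε) 2
    _ = 2 * ‖x 0‖ ^ 2 := by
        rw [Finset.sum_const, Finset.card_univ, Fintype.card_fun, Fintype.card_bool,
          Fintype.card_fin, nsmul_eq_mul]
        push_cast
        ring
    _ = 1 ^ 2 * 2 ^ (Fintype.card (Fin 1)) * ∑ i : Fin 1, ‖x i‖ ^ 2 := by
        rw [Fin.sum_univ_one, Fintype.card_fin]
        ring

lemma ess_main (hδ : 0 < δ) (hF : AlmostLinear F δ) :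
    ∀ k n : ℕ, n ≤ 2 ^ k → EssBound F δ (Fin n) (1 + Real.sqrt 2 * k) := by
  intro k
  induction k with
  | zero =>
    intro n hn
    have hc : (1:ℝ) + Real.sqrt 2 * ((0:ℕ):ℝ) = 1 := by push_cast; ring
    rw [hc]
    interval_cases n
    · exact ess_base0 F δ hδ hF
    · exact ess_base1 F δ hδ hF
  | succ k ih =>
    intro n hn
    have hbase : EssBound F δ (Fin (2 ^ k)) (1 + Real.sqrt 2 * k) := ih (2 ^ k) le_rfl
    have hpair : EssBound F δ (Fin (2 ^ k) × Bool) (1 + Real.sqrt 2 * k + Real.sqrt 2) :=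
      essBound_pair F δ hδ hF (by positivity) hbase
    have h1 : n + (2 ^ (k+1) - n) = 2 ^ (k+1) := Nat.add_sub_cancel' hn
    have h2 : 2 ^ k * 2 = 2 ^ (k+1) := (pow_succ 2 k).symm
    have heq : (Fin n ⊕ Fin (2 ^ (k+1) - n)) ≃ (Fin (2 ^ k) × Bool) :=
      (finSumFinEquiv.trans (finCongr h1)).trans
        ((((Equiv.prodCongr (Equiv.refl (Fin (2 ^ k))) finTwoEquiv.symm).trans
          finProdFinEquiv).trans (finCongr h2)).symm)
    have hfin : EssBound F δ (Fin n ⊕ Fin (2 ^ (k+1) - n))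
        (1 + Real.sqrt 2 * k + Real.sqrt 2) := essBound_equiv F δ heq hpair
    have hres : EssBound F δ (Fin n) (1 + Real.sqrt 2 * k + Real.sqrt 2) :=
      essBound_pad F δ hδ hF hfin
    have hcast : (1:ℝ) + Real.sqrt 2 * ((k+1 : ℕ):ℝ) = 1 + Real.sqrt 2 * k + Real.sqrt 2 := by
      push_cast; ring
    rw [hcast]
    exact hres

end MainDev


theorem stmt19 {X Y : Type*}
    [NormedAddCommGroup X] [InnerProductSpace ℝ X] [FiniteDimensional ℝ X]
    [NormedAddCommGroup Y] [InnerProductSpace ℝ Y] [FiniteDimensional ℝ Y]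
    (F : X → Y) (δ : ℝ) (hδ : 0 < δ) (hF : AlmostLinear F δ) :
    ∀ n : ℕ, 3 ≤ n →
      RadType2With (envNorm (quasiNormF F δ)) n (2 * (1 + Real.sqrt 2) * Real.logb 2 n) := by
  intro n hn z
  simp only [ite_eq_sg]
  set k := Nat.clog 2 n with hk
  have hkn : n ≤ 2 ^ k := Nat.le_pow_clog (by norm_num) n
  set x : Fin n → X := fun j => (z j).2 with hx
  set d : Fin n → Y := fun j => (z j).1 - F (x j) with hd
  have hzj : ∀ j, z j = ((d j, 0) : Y × X) + ((F (x j), x j) : Y × X) := by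
    intro j
    rw [Prod.ext_iff]
    constructor
    · show (z j).1 = d j + F (x j)
      rw [hd]
      simp
    · show (z j).2 = 0 + x j
      rw [hx]
      simp
  have hsplitz : ∀ ε : Fin n → Bool,
      (∑ j, sg (ε j) • z j)
        = (∑ j, sg (ε j) • ((d j, (0:X)) : Y × X))
          + ∑ j, sg (ε j) • ((F (x j), x j) : Y × X) := by
    intro ε
    rw [← Finset.sum_add_distrib]
    apply Finset.sum_congr rfl
    intro j _
    rw [← smul_add, ← hzj j]
  have hdpart : ∀ ε : Fin n → Bool,
      envNorm (quasiNormF F δ) (∑ j, sg (ε j) • ((d j, (0:X)) : Y × X))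
        ≤ ‖∑ j, sg (ε j) • d j‖ / δ := by
    intro ε
    have hzero : (∑ j, sg (ε j) • ((d j, (0:X)) : Y × X))
        = ((∑ j, sg (ε j) • d j, 0) : Y × X) := by
      rw [Prod.ext_iff]
      constructor
      · rw [Prod.fst_sum]
        apply Finset.sum_congr rfl
        intro j _
        rfl
      · rw [Prod.snd_sum]
        simp
    rw [hzero]
    refine (NN_le_q F δ hδ _).trans ?_
    simp [quasiNormF, al_zero F δ hF]
  have hpt : ∀ ε : Fin n → Bool,
      envNorm (quasiNormF F δ) (∑ j, sg (ε j) • z j)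
        ≤ ‖∑ j, sg (ε j) • d j‖ / δ
          + envNorm (quasiNormF F δ) (∑ j, sg (ε j) • ((F (x j), x j) : Y × X)) := by
    intro ε
    rw [hsplitz ε]
    exact le_trans (NN_add F δ hδ _ _) (add_le_add (hdpart ε) le_rfl)
  set SN : ℝ := ∑ j, envNorm (quasiNormF F δ) (z j) ^ 2 with hSN
  have hSNnn : 0 ≤ SN := Finset.sum_nonneg fun j _ => sq_nonneg _
  -- d-part estimate
  have hErr : ∑ ε : Fin n → Bool, (‖∑ j, sg (ε j) • d j‖ / δ) ^ 2
      ≤ (Real.sqrt ((2:ℝ) ^ n * SN)) ^ 2 := by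
    have hc := cube_eq0 n d
    have hsum : ∑ ε : Fin n → Bool, (‖∑ j, sg (ε j) • d j‖ / δ) ^ 2
        = (∑ ε : Fin n → Bool, ‖∑ j, sg (ε j) • d j‖ ^ 2) / δ ^ 2 := by
      rw [Finset.sum_div]
      apply Finset.sum_congr rfl
      intro ε _
      rw [div_pow]
    have hdj : ∀ j, ‖d j‖ ^ 2 / δ ^ 2 ≤ envNorm (quasiNormF F δ) (z j) ^ 2 := by
      intro j
      have h1 : ‖d j‖ / δ ≤ envNorm (quasiNormF F δ) (z j) := NN_defect_le F δ hδ hF (z j)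
      have h2 := pow_le_pow_left₀ (div_nonneg (norm_nonneg _) hδ.le) h1 2
      rwa [div_pow] at h2
    rw [hsum, hc, Real.sq_sqrt (by positivity)]
    calc (2:ℝ) ^ n * (∑ j, ‖d j‖ ^ 2) / δ ^ 2
        = (2:ℝ) ^ n * ∑ j, ‖d j‖ ^ 2 / δ ^ 2 := by
          rw [mul_div_assoc, Finset.sum_div]
      _ ≤ (2:ℝ) ^ n * SN := by
          apply mul_le_mul_of_nonneg_left (Finset.sum_le_sum fun j _ => hdj j) (by positivity)
  -- essential part estimate
  have hEss : ∑ ε : Fin n → Bool,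
      envNorm (quasiNormF F δ) (∑ j, sg (ε j) • ((F (x j), x j) : Y × X)) ^ 2
      ≤ ((1 + Real.sqrt 2 * k) * Real.sqrt ((2:ℝ) ^ n * SN)) ^ 2 := by
    have h0 := ess_main F δ hδ hF k n hkn x
    have hxz : ∑ j, ‖x j‖ ^ 2 ≤ SN :=
      Finset.sum_le_sum fun j _ =>
        pow_le_pow_left₀ (norm_nonneg _) (NN_snd_le F δ hδ (z j)) 2
    calc ∑ ε : Fin n → Bool,
        envNorm (quasiNormF F δ) (∑ j, sg (ε j) • ((F (x j), x j) : Y × X)) ^ 2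
        ≤ (1 + Real.sqrt 2 * k) ^ 2 * 2 ^ (Fintype.card (Fin n)) * ∑ j, ‖x j‖ ^ 2 := h0
      _ ≤ (1 + Real.sqrt 2 * k) ^ 2 * 2 ^ n * SN := by
          rw [Fintype.card_fin]
          exact mul_le_mul_of_nonneg_left hxz (by positivity)
      _ = ((1 + Real.sqrt 2 * k) * Real.sqrt ((2:ℝ) ^ n * SN)) ^ 2 := by
          rw [mul_pow, Real.sq_sqrt (by positivity : (0:ℝ) ≤ (2:ℝ) ^ n * SN)]
          ring
  -- combine
  have hcube := l2tri
    (fun ε : Fin n → Bool => envNorm (quasiNormF F δ) (∑ j, sg (ε j) • z j))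
    (fun ε : Fin n → Bool => ‖∑ j, sg (ε j) • d j‖ / δ)
    (fun ε : Fin n → Bool =>
      envNorm (quasiNormF F δ) (∑ j, sg (ε j) • ((F (x j), x j) : Y × X)))
    (Real.sqrt ((2:ℝ) ^ n * SN))
    ((1 + Real.sqrt 2 * k) * Real.sqrt ((2:ℝ) ^ n * SN))
    (fun ε => NN_nonneg F δ hδ _)
    (fun ε => div_nonneg (norm_nonneg _) hδ.le)
    (fun ε => NN_nonneg F δ hδ _)
    hpt
    (Real.sqrt_nonneg _)
    (by positivity)
    hErr hEss
  -- numerics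
  set L := Real.logb 2 n with hL
  have hL1 : 1 ≤ L := by
    have h2 : Real.logb 2 2 ≤ Real.logb 2 (n:ℝ) :=
      Real.logb_le_logb_of_le (by norm_num) (by norm_num) (by exact_mod_cast by omega)
    rw [Real.logb_self_eq_one (by norm_num)] at h2
    exact h2
  have hkL : (k:ℝ) ≤ L + 1 := by
    have hk1 : 0 < k := Nat.clog_pos (by norm_num) (by omega)
    have hlt : 2 ^ (k - 1) < n := by
      have := Nat.pow_pred_clog_lt_self (b := 2) (by norm_num) (x := n) (by omega)
      simpa [hk] using this
    have hcast : ((2:ℝ)) ^ (k - 1 : ℕ) < (n:ℝ) := by exact_mod_cast hlt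
    have hlog : Real.logb 2 ((2:ℝ) ^ (k - 1 : ℕ)) ≤ L :=
      Real.logb_le_logb_of_le (by norm_num) (by positivity) hcast.le
    rw [Real.logb_pow, Real.logb_self_eq_one (by norm_num), mul_one] at hlog
    have hsub : ((k - 1 : ℕ) : ℝ) = (k:ℝ) - 1 := by
      rw [Nat.cast_sub hk1, Nat.cast_one]
    rw [hsub] at hlog
    linarith
  have hs2 : 0 ≤ Real.sqrt 2 := Real.sqrt_nonneg 2
  have hnum : 2 + Real.sqrt 2 * k ≤ 2 * (1 + Real.sqrt 2) * L := by
    have hp1 : (2 + Real.sqrt 2) * 1 ≤ (2 + Real.sqrt 2) * L :=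
      mul_le_mul_of_nonneg_left hL1 (by positivity)
    have hp2 : Real.sqrt 2 * (k:ℝ) ≤ Real.sqrt 2 * (L + 1) :=
      mul_le_mul_of_nonneg_left hkL hs2
    nlinarith [hp1, hp2]
  -- final chain
  have hfrac : (∑ ε : Fin n → Bool, envNorm (quasiNormF F δ) (∑ j, sg (ε j) • z j) ^ 2)
      / 2 ^ n ≤ (2 + Real.sqrt 2 * k) ^ 2 * SN := by
    rw [div_le_iff₀ (by positivity : (0:ℝ) < 2 ^ n)]
    calc ∑ ε : Fin n → Bool, envNorm (quasiNormF F δ) (∑ j, sg (ε j) • z j) ^ 2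
        ≤ (Real.sqrt ((2:ℝ) ^ n * SN)
            + (1 + Real.sqrt 2 * k) * Real.sqrt ((2:ℝ) ^ n * SN)) ^ 2 := hcube
      _ = (2 + Real.sqrt 2 * k) ^ 2 * ((2:ℝ) ^ n * SN) := by
          have hq := Real.sq_sqrt (by positivity : (0:ℝ) ≤ (2:ℝ) ^ n * SN)
          nlinarith [hq]
      _ = (2 + Real.sqrt 2 * k) ^ 2 * SN * 2 ^ n := by ring
  calc Real.sqrt ((∑ ε : Fin n → Bool,
      envNorm (quasiNormF F δ) (∑ j, sg (ε j) • z j) ^ 2) / 2 ^ n)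
      ≤ Real.sqrt ((2 + Real.sqrt 2 * k) ^ 2 * SN) := Real.sqrt_le_sqrt hfrac
    _ = (2 + Real.sqrt 2 * k) * Real.sqrt SN := by
        rw [Real.sqrt_mul (sq_nonneg _), Real.sqrt_sq (by positivity)]
    _ ≤ 2 * (1 + Real.sqrt 2) * L * Real.sqrt SN :=
        mul_le_mul_of_nonneg_right hnum (Real.sqrt_nonneg _)
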